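/- Let 0 < λ ≤ Λ, let 0 < β < 1, and define φ(x,t) = t^{1−β} + (1 + t^β)|x|² for x ∈ ℝⁿ and t > 0. Let b₀, c₀ : (0,T) → [0,∞) satisfy t·b₀(t)² → 0, t·c₀(t) → 0, and t^{β−1}·c₀(t) → 0 as t → 0⁺, and let b : Ω_T → ℝⁿ, c : Ω_T → ℝ satisfy |b(x,t)| ≤ b₀(t) and |c(x,t)| ≤ c₀(t) with c ≤ 0. Then there exists T₂ ∈ (0,1] such that, with γ₂ = min(β/2, (1−β)/2), for all x ∈ Ω and 0 < t ≤ T₂: −∂φ/∂t(x,t) + M⁺_{λ,Λ}(D²φ(x,t)) + b(x,t)·Dφ(x,t) + c(x,t)φ(x,t) ≤ −γ₂ ( t^{−β} + t^{β−1} |x|² ). -/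

import Mathlib

open Matrix Set Filter

/-- Pucci's maximal operator on real symmetric matrices. -/
noncomputable def pucciPlus (lam Lam : ℝ) {n : ℕ} (A : Matrix (Fin n) (Fin n) ℝ) : ℝ :=
  if h : A.IsHermitian then
    ∑ i, (Lam * max (h.eigenvalues i) 0 + lam * min (h.eigenvalues i) 0)
  else 0

/-- Pucci's minimal operator on real symmetric matrices. -/
noncomputable def pucciMinus (lam Lam : ℝ) {n : ℕ} (A : Matrix (Fin n) (Fin n) ℝ) : ℝ :=
  if h : A.IsHermitian then
    ∑ i, (lam * max (h.eigenvalues i) 0 + Lam * min (h.eigenvalues i) 0)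
  else 0

/-- Spatial gradient as a vector of partial derivatives. -/
noncomputable def grad {n : ℕ} (f : EuclideanSpace ℝ (Fin n) → ℝ)
    (x : EuclideanSpace ℝ (Fin n)) : EuclideanSpace ℝ (Fin n) :=
  WithLp.toLp 2 fun i => fderiv ℝ f x (EuclideanSpace.single i 1)

/-- Spatial Hessian as the matrix of second partial derivatives. -/
noncomputable def hess {n : ℕ} (f : EuclideanSpace ℝ (Fin n) → ℝ)
    (x : EuclideanSpace ℝ (Fin n)) : Matrix (Fin n) (Fin n) ℝ :=
  Matrix.of fun i j =>
    fderiv ℝ (fun y => fderiv ℝ f y (EuclideanSpace.single j 1)) x (EuclideanSpace.single i 1)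

lemma smul_one_eigenvalues {n : ℕ} (a : ℝ) (h : (a • (1 : Matrix (Fin n) (Fin n) ℝ)).IsHermitian)
    (i : Fin n) : h.eigenvalues i = a := by
  have hv := h.mulVec_eigenvectorBasis i
  rw [smul_mulVec, one_mulVec] at hv
  have hne : (h.eigenvectorBasis i : EuclideanSpace ℝ (Fin n)) ≠ 0 :=
    h.eigenvectorBasis.orthonormal.ne_zero i
  by_contra hc
  apply hne
  have h2 := sub_eq_zero.mpr hv.symm
  rw [← sub_smul] at h2
  have h3 := (smul_eq_zero.mp h2).resolve_left (sub_ne_zero.mpr hc)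
  ext j
  exact congrFun h3 j

lemma pucci_smul_one {n : ℕ} (lam Lam a : ℝ) (ha : 0 ≤ a) :
    pucciPlus lam Lam (a • (1 : Matrix (Fin n) (Fin n) ℝ)) = n * (Lam * a) := by
  have h : (a • (1 : Matrix (Fin n) (Fin n) ℝ)).IsHermitian :=
    by simp [Matrix.IsHermitian]
  rw [pucciPlus, dif_pos h]
  have : ∀ i, h.eigenvalues i = a := smul_one_eigenvalues a h
  simp [this, max_eq_left ha, min_eq_right ha, Finset.sum_const, mul_comm]

lemma hasFDerivAt_quad {n : ℕ} (C a : ℝ) (x : EuclideanSpace ℝ (Fin n)) :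
    HasFDerivAt (fun y : EuclideanSpace ℝ (Fin n) => C + a * ‖y‖ ^ 2)
      (a • (2 • (innerSL ℝ x))) x :=
  (((hasStrictFDerivAt_norm_sq x).hasFDerivAt).const_mul a).const_add C

lemma fderiv_quad {n : ℕ} (C a : ℝ) (y : EuclideanSpace ℝ (Fin n)) (v : EuclideanSpace ℝ (Fin n)) :
    fderiv ℝ (fun y : EuclideanSpace ℝ (Fin n) => C + a * ‖y‖ ^ 2) y v
      = 2 * a * (inner ℝ y v : ℝ) := by
  rw [(hasFDerivAt_quad C a y).fderiv]
  simp [real_inner_comm]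
  ring

lemma grad_quad {n : ℕ} (C a : ℝ) (x : EuclideanSpace ℝ (Fin n)) (i : Fin n) :
    grad (fun y : EuclideanSpace ℝ (Fin n) => C + a * ‖y‖ ^ 2) x i = 2 * a * x i := by
  rw [grad, PiLp.toLp_apply, fderiv_quad]
  congr 1
  simp [EuclideanSpace.inner_single_right]

lemma hess_quad {n : ℕ} (C a : ℝ) (x : EuclideanSpace ℝ (Fin n)) :
    hess (fun y : EuclideanSpace ℝ (Fin n) => C + a * ‖y‖ ^ 2) x
      = (2 * a) • (1 : Matrix (Fin n) (Fin n) ℝ) := by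
  ext i j
  show fderiv ℝ (fun y => fderiv ℝ (fun y : EuclideanSpace ℝ (Fin n) => C + a * ‖y‖ ^ 2) y
      (EuclideanSpace.single j 1)) x (EuclideanSpace.single i 1) = _
  have h1 : (fun y : EuclideanSpace ℝ (Fin n) => fderiv ℝ
      (fun y : EuclideanSpace ℝ (Fin n) => C + a * ‖y‖ ^ 2) y (EuclideanSpace.single j 1))
      = fun y => (2 * a) * (EuclideanSpace.proj j y) := by
    funext y
    rw [fderiv_quad]
    simp [EuclideanSpace.inner_single_right]
  rw [h1]
  have h2 : HasFDerivAt (fun y : EuclideanSpace ℝ (Fin n) => (2 * a) * (EuclideanSpace.proj j y))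
      ((2 * a) • (EuclideanSpace.proj j : EuclideanSpace ℝ (Fin n) →L[ℝ] ℝ)) x :=
    ((EuclideanSpace.proj j : EuclideanSpace ℝ (Fin n) →L[ℝ] ℝ).hasFDerivAt (x := x)).const_mul
      (2 * a)
  rw [h2.fderiv]
  simp [Matrix.one_apply, EuclideanSpace.single_apply, eq_comm]

lemma deriv_phi_time (β X : ℝ) {t : ℝ} (ht : 0 < t) :
    deriv (fun s : ℝ => s ^ (1 - β) + (1 + s ^ β) * X) t
      = (1 - β) * t ^ (-β) + (β * t ^ (β - 1)) * X := by
  have h1 : HasDerivAt (fun s : ℝ => s ^ (1 - β)) ((1 - β) * t ^ (1 - β - 1)) t :=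
    Real.hasDerivAt_rpow_const (Or.inl ht.ne')
  have h2 : HasDerivAt (fun s : ℝ => s ^ β) (β * t ^ (β - 1)) t :=
    Real.hasDerivAt_rpow_const (Or.inl ht.ne')
  have h3 := h1.add ((h2.const_add 1).mul_const X)
  rw [show (1 - β - 1) = -β by ring] at h3
  exact h3.deriv


lemma key_ineq (β γ nL t u q p s a A K r S cφ : ℝ)
    (hβ : 0 < β) (hβ1 : β < 1)
    (hγ1 : γ ≤ β / 2) (hγ2 : γ ≤ (1 - β) / 2)
    (hnL : 0 ≤ nL) (ht : 0 < t)
    (hu : 0 < u) (hu1 : u ≤ 1) (hq : 0 < q) (hp : 0 < p) (hs : 0 < s)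
    (ha : a = 1 + u)
    (hqu : q * u = t) (hsu : s * u = 1) (hqp : q = p⁻¹)
    (hA : 0 ≤ A) (hK : 0 ≤ K) (hr : 0 ≤ r)
    (hS : S ≤ 2 * a * (A * r))
    (hcφ : cφ ≤ K * q)
    (hg : 4 * nL * u + 16 / β * (t * A ^ 2) + t * K < (1 - β) / 2) :
    -((1 - β) * s + β * p * r ^ 2) + 2 * nL * a + S + cφ ≤ -γ * (s + p * r ^ 2) := by
  have ha0 : 0 < a := by rw [ha]; linarith
  have ha2 : a ≤ 2 := by rw [ha]; linarith
  have hamgm : 2 * a * (A * r) ≤ (β / 4) * p * r ^ 2 + (4 / β) * (a * A) ^ 2 * q := by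
    have key : (β / 4) * p * r ^ 2 + (4 / β) * (a * A) ^ 2 * q - 2 * a * (A * r)
        = (β * p * r - 4 * (a * A)) ^ 2 / (4 * β * p) := by
      rw [hqp]
      field_simp
      ring
    have hnn : (0:ℝ) ≤ (β * p * r - 4 * (a * A)) ^ 2 / (4 * β * p) := by positivity
    linarith [key, hnn]
  have htA : 0 ≤ t * A ^ 2 := by positivity
  have htK : 0 ≤ t * K := by positivity
  have hmain : 2 * nL * a + (4 / β) * (a * A) ^ 2 * q + K * q ≤ ((1 - β) / 2) * s := by
    have h5 : (2 * nL * a + (4 / β) * (a * A) ^ 2 * q + K * q) * u ≤ (1 - β) / 2 := by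
      have hexp : (2 * nL * a + (4 / β) * (a * A) ^ 2 * q + K * q) * u
          = 2 * nL * (a * u) + (4 / β) * a ^ 2 * (A ^ 2 * (q * u)) + K * (q * u) := by ring
      rw [hexp, hqu]
      have e1 : 2 * nL * (a * u) ≤ 4 * nL * u := by
        have := mul_le_mul_of_nonneg_left ha2 (mul_nonneg hnL hu.le)
        nlinarith [this]
      have e2 : (4 / β) * a ^ 2 * (A ^ 2 * t) ≤ (16 / β) * (t * A ^ 2) := by
        have ha4 : a ^ 2 ≤ 4 := by nlinarith [ha0, ha2]
        have h4β : (0:ℝ) < 4 / β := by positivity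
        calc (4 / β) * a ^ 2 * (A ^ 2 * t) ≤ (4 / β) * 4 * (A ^ 2 * t) := by
              apply mul_le_mul_of_nonneg_right _ (by positivity)
              exact mul_le_mul_of_nonneg_left ha4 h4β.le
          _ = (16 / β) * (t * A ^ 2) := by ring
      linarith [e1, e2, hg]
    have h6 : (2 * nL * a + (4 / β) * (a * A) ^ 2 * q + K * q) * u
        ≤ (((1 - β) / 2) * s) * u := by
      rw [show (((1 - β) / 2) * s) * u = ((1 - β) / 2) * (s * u) by ring, hsu, mul_one]
      exact h5
    exact le_of_mul_le_mul_right h6 hu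
  have hγs : ((1 - β) / 2) * s ≤ (1 - β - γ) * s :=
    mul_le_mul_of_nonneg_right (by linarith) hs.le
  have hγp : (β / 4) * (p * r ^ 2) ≤ (β - γ) * (p * r ^ 2) :=
    mul_le_mul_of_nonneg_right (by linarith) (mul_nonneg hp.le (sq_nonneg r))
  linarith [hS, hamgm, hcφ, hmain, hγs, hγp]

set_option maxHeartbeats 1000000 in
/-- the function `φ(x,t) = t^(1−β) + (1 + t^β)|x|²` is a strict supersolution:
for some `T₂ ∈ (0, 1]`, `T₂ ≤ T`, and with `γ₂ = min(β/2, (1−β)/2)`,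
`-φ_t + M⁺(D²φ) + b·Dφ + cφ ≤ −γ₂ (t^(−β) + t^(β−1)|x|²)` on `Ω × (0,T₂]`. -/
theorem phi_supersolution {n : ℕ} (lam Lam : ℝ) (hlam : 0 < lam) (hLam : lam ≤ Lam)
    (β : ℝ) (hβ : 0 < β) (hβ1 : β < 1)
    (Ω : Set (EuclideanSpace ℝ (Fin n))) (T : ℝ) (hT : 0 < T)
    (b₀ c₀ : ℝ → ℝ)
    (hb₀pos : ∀ t ∈ Ioo 0 T, 0 ≤ b₀ t) (hc₀pos : ∀ t ∈ Ioo 0 T, 0 ≤ c₀ t)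
    (hb₀ : Filter.Tendsto (fun t => t * b₀ t ^ 2) (nhdsWithin 0 (Ioi 0)) (nhds 0))
    (hc₀ : Filter.Tendsto (fun t => t * c₀ t) (nhdsWithin 0 (Ioi 0)) (nhds 0))
    (hc₀' : Filter.Tendsto (fun t => t ^ (β - 1) * c₀ t) (nhdsWithin 0 (Ioi 0)) (nhds 0))
    (b : EuclideanSpace ℝ (Fin n) → ℝ → EuclideanSpace ℝ (Fin n))
    (c : EuclideanSpace ℝ (Fin n) → ℝ → ℝ)
    (hb : ∀ x ∈ Ω, ∀ t ∈ Ioo 0 T, ‖b x t‖ ≤ b₀ t)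
    (hc : ∀ x ∈ Ω, ∀ t ∈ Ioo 0 T, |c x t| ≤ c₀ t)
    (hcneg : ∀ x ∈ Ω, ∀ t ∈ Ioo 0 T, c x t ≤ 0)
    (φ : EuclideanSpace ℝ (Fin n) → ℝ → ℝ)
    (hφ : ∀ x t, φ x t = t ^ (1 - β) + (1 + t ^ β) * ‖x‖ ^ 2) :
    ∃ T₂ : ℝ, 0 < T₂ ∧ T₂ ≤ 1 ∧ T₂ ≤ T ∧
      ∀ x ∈ Ω, ∀ t : ℝ, 0 < t → t ≤ T₂ →
        -(deriv (fun s => φ x s) t) + pucciPlus lam Lam (hess (fun y => φ y t) x)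
            + (∑ i, b x t i * grad (fun y => φ y t) x i) + c x t * φ x t
          ≤ -(min (β / 2) ((1 - β) / 2)) * (t ^ (-β) + t ^ (β - 1) * ‖x‖ ^ 2) := by
  have hLam0 : (0:ℝ) < Lam := lt_of_lt_of_le hlam hLam
  have hnL : (0:ℝ) ≤ (n : ℝ) * Lam := by positivity
  have hg : Tendsto (fun t : ℝ => 4 * (n : ℝ) * Lam * t ^ β + (16 / β) * (t * b₀ t ^ 2)
      + t * c₀ t) (nhdsWithin 0 (Ioi 0)) (nhds 0) := by
    have h1 : Tendsto (fun t : ℝ => t ^ β) (nhdsWithin 0 (Ioi 0)) (nhds 0) := by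
      have hcont : ContinuousAt (fun t : ℝ => t ^ β) 0 :=
        Real.continuousAt_rpow_const 0 β (Or.inr hβ.le)
      have := hcont.tendsto
      rw [Real.zero_rpow hβ.ne'] at this
      exact tendsto_nhdsWithin_of_tendsto_nhds this
    have h2 := ((h1.const_mul (4 * (n : ℝ) * Lam)).add (hb₀.const_mul (16 / β))).add hc₀
    simpa [mul_comm] using h2
  have hev : ∀ᶠ t in nhdsWithin 0 (Ioi 0), 4 * (n : ℝ) * Lam * t ^ β
      + (16 / β) * (t * b₀ t ^ 2) + t * c₀ t < (1 - β) / 2 :=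
    hg.eventually (gt_mem_nhds (by linarith))
  rw [eventually_nhdsWithin_iff, Metric.eventually_nhds_iff] at hev
  obtain ⟨δ, hδpos, hδ⟩ := hev
  refine ⟨min (min 1 (T / 2)) (δ / 2), by positivity, le_trans (min_le_left _ _) (min_le_left _ _),
    le_trans (min_le_left _ _) ((min_le_right _ _).trans (by linarith)), ?_⟩
  intro x hx t ht0 htle
  have ht1 : t ≤ 1 := le_trans htle (le_trans (min_le_left _ _) (min_le_left _ _))
  have htT : t < T := lt_of_le_of_lt
    (le_trans htle (le_trans (min_le_left _ _) (min_le_right _ _))) (by linarith)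
  have htδ : t < δ := lt_of_le_of_lt (le_trans htle (min_le_right _ _)) (by linarith)
  have htIoo : t ∈ Ioo 0 T := ⟨ht0, htT⟩
  have hgδ : 4 * (n : ℝ) * Lam * t ^ β + (16 / β) * (t * b₀ t ^ 2) + t * c₀ t < (1 - β) / 2 :=
    hδ (by simpa [Real.dist_eq, abs_of_pos ht0] using htδ) ht0
  have hu : (0:ℝ) < t ^ β := Real.rpow_pos_of_pos ht0 _
  have hq0 : (0:ℝ) < t ^ (1 - β) := Real.rpow_pos_of_pos ht0 _
  have hp0 : (0:ℝ) < t ^ (β - 1) := Real.rpow_pos_of_pos ht0 _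
  have hs0 : (0:ℝ) < t ^ (-β) := Real.rpow_pos_of_pos ht0 _
  have hu1 : t ^ β ≤ 1 := Real.rpow_le_one ht0.le ht1 hβ.le
  have hqu : t ^ (1 - β) * t ^ β = t := by
    rw [← Real.rpow_add ht0]; simp
  have hsu : t ^ (-β) * t ^ β = 1 := by
    rw [← Real.rpow_add ht0]; simp
  have hqp : t ^ (1 - β) = (t ^ (β - 1))⁻¹ := by
    rw [← Real.rpow_neg ht0.le]; norm_num
  -- rewrite the differential expressions explicitly
  simp only [hφ]
  rw [deriv_phi_time β _ ht0, hess_quad, pucci_smul_one _ _ _ (by positivity)]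
  simp only [grad_quad]
  have hsum : ∑ i, b x t i * (2 * (1 + t ^ β) * x i)
      = 2 * (1 + t ^ β) * ∑ i, b x t i * x i := by
    rw [Finset.mul_sum]
    exact Finset.sum_congr rfl fun i _ => by ring
  rw [hsum]
  have hdrift : 2 * (1 + t ^ β) * ∑ i, b x t i * x i
      ≤ 2 * (1 + t ^ β) * (b₀ t * ‖x‖) := by
    have hinner : ∑ i, b x t i * x i = (inner ℝ (b x t) x : ℝ) := by
      rw [PiLp.inner_apply]
      simp [RCLike.inner_apply, mul_comm]
    rw [hinner]
    have h1 : (inner ℝ (b x t) x : ℝ) ≤ ‖b x t‖ * ‖x‖ := real_inner_le_norm _ _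
    have h2 : ‖b x t‖ * ‖x‖ ≤ b₀ t * ‖x‖ :=
      mul_le_mul_of_nonneg_right (hb x hx t htIoo) (norm_nonneg x)
    exact mul_le_mul_of_nonneg_left (h1.trans h2) (by positivity)
  have hcterm : c x t * (t ^ (1 - β) + (1 + t ^ β) * ‖x‖ ^ 2) ≤ c₀ t * t ^ (1 - β) := by
    have h1 : c x t * t ^ (1 - β) ≤ c₀ t * t ^ (1 - β) :=
      mul_le_mul_of_nonneg_right (abs_le.mp (hc x hx t htIoo)).2 hq0.le
    have h2 : c x t * ((1 + t ^ β) * ‖x‖ ^ 2) ≤ 0 :=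
      mul_nonpos_of_nonpos_of_nonneg (hcneg x hx t htIoo) (by positivity)
    have hexp : c x t * (t ^ (1 - β) + (1 + t ^ β) * ‖x‖ ^ 2)
        = c x t * t ^ (1 - β) + c x t * ((1 + t ^ β) * ‖x‖ ^ 2) := by ring
    linarith [h1, h2, hexp]
  have hkey := key_ineq β (min (β / 2) ((1 - β) / 2)) ((n : ℝ) * Lam) t (t ^ β) (t ^ (1 - β))
    (t ^ (β - 1)) (t ^ (-β)) (1 + t ^ β) (b₀ t) (c₀ t) ‖x‖
    (2 * (1 + t ^ β) * ∑ i, b x t i * x i)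
    (c x t * (t ^ (1 - β) + (1 + t ^ β) * ‖x‖ ^ 2))
    hβ hβ1 (min_le_left _ _) (min_le_right _ _) hnL ht0 hu hu1 hq0 hp0 hs0 rfl hqu hsu hqp
    (hb₀pos t htIoo) (hc₀pos t htIoo) (norm_nonneg x) hdrift hcterm (by linarith [hgδ])
  linarith [hkey]
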